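/- For every graph G, there exists a successful standard layout (a layout with at most one searcher per vertex) using exactly d(G) searchers. -/

import Mathlib

open Finset in
/-- One stage of the deduction game.  The state is a pair `(P, F)` where `P` is the set of
protected vertices and `F` is the set of vertices whose initial searchers have already fired
(moved).  A vertex `v` is fireable if it is occupied, has not yet fired, and the number of
searchers on it (in the initial layout `L`) is at least its number of unprotected neighbours.
All fireable vertices fire simultaneously: one searcher moves to each unprotected neighbour,
which thereby becomes protected. -/
def dedStep {V : Type*} [Fintype V] [DecidableEq V] (G : SimpleGraph V) [DecidableRel G.Adj]
    (L : V → ℕ) (s : Finset V × Finset V) : Finset V × Finset V :=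
  let fire : Finset V := univ.filter (fun v =>
    0 < L v ∧ v ∉ s.2 ∧ (univ.filter (fun u => G.Adj v u ∧ u ∉ s.1)).card ≤ L v)
  (s.1 ∪ fire.biUnion (fun v => univ.filter (fun u => G.Adj v u ∧ u ∉ s.1)), s.2 ∪ fire)

open Finset in
/-- A layout `L` (assigning a number of searchers to each vertex) is successful if, starting
from the initially occupied vertices being protected and no vertex having fired, iterating the
deduction stages eventually protects every vertex. -/
def DedSuccessful {V : Type*} [Fintype V] [DecidableEq V] (G : SimpleGraph V)
    [DecidableRel G.Adj] (L : V → ℕ) : Prop :=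
  ∃ k : ℕ, ((dedStep G L)^[k] (univ.filter (fun v => 0 < L v), ∅)).1 = univ

/-- The deduction number of `G`: the minimum number of searchers in a successful layout. -/
noncomputable def deductionNumber {V : Type*} [Fintype V] (G : SimpleGraph V) : ℕ :=
  letI := Classical.decEq V
  letI := Classical.decRel G.Adj
  sInf {n | ∃ L : V → ℕ, (∑ v, L v) = n ∧ DedSuccessful G L}

namespace DedAux

open Finset

variable {V : Type*} [Fintype V] [DecidableEq V] (G : SimpleGraph V) [DecidableRel G.Adj]

/-- The unprotected neighbours of `v` when `s` is the protected set. -/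
def unp (s : Finset V) (v : V) : Finset V := univ.filter (fun u => G.Adj v u ∧ u ∉ s)

/-- The set of vertices that fire from state `s`. -/
def fset (L : V → ℕ) (s : Finset V × Finset V) : Finset V :=
  univ.filter (fun v => 0 < L v ∧ v ∉ s.2 ∧ (unp G s.1 v).card ≤ L v)

lemma dedStep_def (L : V → ℕ) (s : Finset V × Finset V) :
    dedStep G L s = (s.1 ∪ (fset G L s).biUnion (unp G s.1), s.2 ∪ fset G L s) := rfl

/-- The state after `k` rounds. -/
def it (L : V → ℕ) (k : ℕ) : Finset V × Finset V :=
  (dedStep G L)^[k] (univ.filter (fun v => 0 < L v), ∅)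

lemma it_zero (L : V → ℕ) : it G L 0 = (univ.filter (fun v => 0 < L v), ∅) := rfl

lemma it_succ (L : V → ℕ) (k : ℕ) : it G L (k+1) = dedStep G L (it G L k) :=
  Function.iterate_succ_apply' _ _ _

lemma mem_fset {L : V → ℕ} {v : V} {s : Finset V × Finset V} :
    v ∈ fset G L s ↔ 0 < L v ∧ v ∉ s.2 ∧ (unp G s.1 v).card ≤ L v := by
  simp [fset]

lemma unp_mono {s t : Finset V} (h : s ⊆ t) (v : V) : unp G t v ⊆ unp G s v := by
  intro x hx
  simp only [unp, mem_filter, mem_univ, true_and] at hx ⊢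
  exact ⟨hx.1, fun h' => hx.2 (h h')⟩

lemma P_mono (L : V → ℕ) {j k : ℕ} (h : j ≤ k) : (it G L j).1 ⊆ (it G L k).1 := by
  induction k with
  | zero => simpa [Nat.le_zero.mp h] using Finset.Subset.refl _
  | succ k ih =>
    rcases Nat.lt_or_ge j (k+1) with hlt | hge
    · have := ih (Nat.lt_succ_iff.mp hlt)
      rw [it_succ, dedStep_def]
      exact this.trans subset_union_left
    · have : j = k + 1 := le_antisymm h hge
      subst this; exact Finset.Subset.refl _

lemma F_mono (L : V → ℕ) {j k : ℕ} (h : j ≤ k) : (it G L j).2 ⊆ (it G L k).2 := by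
  induction k with
  | zero => simpa [Nat.le_zero.mp h] using Finset.Subset.refl _
  | succ k ih =>
    rcases Nat.lt_or_ge j (k+1) with hlt | hge
    · have := ih (Nat.lt_succ_iff.mp hlt)
      rw [it_succ, dedStep_def]
      exact this.trans subset_union_left
    · have : j = k + 1 := le_antisymm h hge
      subst this; exact Finset.Subset.refl _

lemma fire_mem_F {L : V → ℕ} {v : V} {j : ℕ} (h : v ∈ fset G L (it G L j)) :
    v ∈ (it G L (j+1)).2 := by
  rw [it_succ, dedStep_def]
  exact mem_union_right _ h

lemma fset_unique {L : V → ℕ} {v : V} {j j' : ℕ}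
    (h : v ∈ fset G L (it G L j)) (h' : v ∈ fset G L (it G L j')) : j = j' := by
  rcases lt_trichotomy j j' with hlt | heq | hlt
  · exact absurd (F_mono G L hlt (fire_mem_F G h)) (fun hh => ((mem_fset G).mp h').2.1 hh)
  · exact heq
  · exact absurd (F_mono G L hlt (fire_mem_F G h')) (fun hh => ((mem_fset G).mp h).2.1 hh)

/-- Every vertex that has fired has all its neighbours protected. -/
lemma fired_protected (L : V → ℕ) : ∀ k, ∀ w ∈ (it G L k).2, ∀ x, G.Adj w x → x ∈ (it G L k).1 := by
  intro k
  induction k with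
  | zero => simp [it_zero]
  | succ k ih =>
    intro w hw x hx
    rw [it_succ, dedStep_def] at hw ⊢
    simp only [mem_union] at hw
    rcases hw with hw | hw
    · exact mem_union_left _ (ih w hw x hx)
    · by_cases hxp : x ∈ (it G L k).1
      · exact mem_union_left _ hxp
      · refine mem_union_right _ (mem_biUnion.2 ⟨w, hw, ?_⟩)
        simp only [unp, mem_filter, mem_univ, true_and]
        exact ⟨hx, hxp⟩

/-- Coupling / domination lemma: if `L'` has enough searchers to replicate (up to time `K`)
every firing of the `L`-game, given headstart `A` of extra protected vertices, then the
`L'`-game dominates the `L`-game. -/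
lemma coupling (L L' : V → ℕ) (A : Finset V) (K : ℕ)
    (h0 : ∀ w, 0 < L w → 0 < L' w) (hA : ∀ a ∈ A, 0 < L' a)
    (hcap : ∀ j < K, ∀ w ∈ fset G L (it G L j),
      0 < L' w ∧ (unp G ((it G L j).1 ∪ A) w).card ≤ L' w) :
    ∀ k ≤ K, (it G L k).1 ∪ A ⊆ (it G L' k).1 ∧ (it G L k).2 ⊆ (it G L' k).2 := by
  intro k
  induction k with
  | zero =>
    intro _
    constructor
    · rw [it_zero, it_zero]
      apply union_subset
      · intro x hx
        simp only [mem_filter, mem_univ, true_and] at hx ⊢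
        exact h0 x hx
      · intro a ha
        simp only [mem_filter, mem_univ, true_and]
        exact hA a ha
    · simp [it_zero]
  | succ k ih =>
    intro hk
    obtain ⟨hP, hF⟩ := ih (by omega)
    have hkK : k < K := by omega
    have key : ∀ w ∈ fset G L (it G L k),
        w ∈ (it G L' k).2 ∨ w ∈ fset G L' (it G L' k) := by
      intro w hw
      by_cases hwF : w ∈ (it G L' k).2
      · exact Or.inl hwF
      · right
        obtain ⟨h1, h2⟩ := hcap k hkK w hw
        rw [mem_fset]
        exact ⟨h1, hwF, le_trans (card_le_card (unp_mono G hP w)) h2⟩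
    constructor
    · rw [it_succ, it_succ, dedStep_def, dedStep_def]
      intro x hx
      simp only [mem_union] at hx
      rcases hx with (hx | hx) | hx
      · exact mem_union_left _ (hP (mem_union_left _ hx))
      · obtain ⟨w, hw, hxw⟩ := mem_biUnion.mp hx
        simp only [unp, mem_filter, mem_univ, true_and] at hxw
        rcases key w hw with hwF | hwf
        · exact mem_union_left _ (fired_protected G L' k w hwF x hxw.1)
        · by_cases hxp : x ∈ (it G L' k).1
          · exact mem_union_left _ hxp
          · refine mem_union_right _ (mem_biUnion.2 ⟨w, hwf, ?_⟩)
            simp only [unp, mem_filter, mem_univ, true_and]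
            exact ⟨hxw.1, hxp⟩
      · exact mem_union_left _ (hP (mem_union_right _ hx))
    · rw [it_succ, it_succ, dedStep_def, dedStep_def]
      intro x hx
      simp only [mem_union] at hx ⊢
      rcases hx with hx | hx
      · exact Or.inl (hF hx)
      · rcases key x hx with h | h
        · exact Or.inl h
        · exact Or.inr h

lemma succ_iff (L : V → ℕ) : DedSuccessful G L ↔ ∃ k, (it G L k).1 = univ := Iff.rfl

/-- Main standardization lemma. -/
lemma standardize : ∀ n (L : V → ℕ), (∑ v, L v * L v) = n → DedSuccessful G L →
    ∃ L' : V → ℕ, (∀ v, L' v ≤ 1) ∧ DedSuccessful G L' ∧ (∑ v, L' v) ≤ ∑ v, L v := by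
  intro n
  induction n using Nat.strong_induction_on with
  | _ n ih =>
    intro L hn hL
    by_cases hstd : ∀ v, L v ≤ 1
    · exact ⟨L, hstd, hL, le_refl _⟩
    push_neg at hstd
    obtain ⟨v, hv⟩ := hstd
    obtain ⟨K, hK⟩ := hL
    have hK : (it G L K).1 = univ := hK
    by_cases hvF : v ∈ (it G L K).2
    · -- v fires at some first time k*
      have hex : ∃ j, v ∈ (it G L j).2 := ⟨K, hvF⟩
      have hfind0 : Nat.find hex ≠ 0 := by
        intro h0
        have := Nat.find_spec hex
        rw [h0] at this
        simp [it_zero] at this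
      obtain ⟨ks, hks⟩ := Nat.exists_eq_succ_of_ne_zero hfind0
      rw [Nat.succ_eq_add_one] at hks
      have hkslt : ks + 1 ≤ K := by
        rw [← hks]; exact Nat.find_min' hex hvF
      have hvfire : v ∈ fset G L (it G L ks) := by
        have h1 : v ∈ (it G L (ks+1)).2 := by rw [← hks]; exact Nat.find_spec hex
        have h2 : v ∉ (it G L ks).2 := by
          intro h; exact Nat.find_min hex (by omega : ks < Nat.find hex) h
        rw [it_succ, dedStep_def] at h1
        simp only [mem_union] at h1
        tauto
      have hd : (unp G (it G L ks).1 v).card ≤ L v := ((mem_fset G).mp hvfire).2.2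
      set d := (unp G (it G L ks).1 v).card with hdd
      by_cases hdlt : d < L v
      · -- wasted searchers at v : reduce to max d 1
        set L' := Function.update L v (max d 1) with hL'
        have hL'v : L' v = max d 1 := Function.update_self _ _ _
        have hL'ne : ∀ w, w ≠ v → L' w = L w := fun w hw => Function.update_of_ne hw _ _
        have hmaxlt : max d 1 < L v := max_lt hdlt hv
        have hsucc : DedSuccessful G L' := by
          rw [succ_iff]
          refine ⟨K, ?_⟩
          have := coupling G L L' ∅ K
            (fun w hw => by
              by_cases hwv : w = v
              · subst hwv; rw [hL'v]
                exact Nat.lt_of_lt_of_le Nat.zero_lt_one (le_max_right _ _)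
              · rw [hL'ne w hwv]; exact hw)
            (by simp)
            (fun j hj w hw => by
              by_cases hwv : w = v
              · rw [hwv] at hw ⊢
                have hje : j = ks := fset_unique G hw hvfire
                subst hje
                constructor
                · rw [hL'v]
                  exact Nat.lt_of_lt_of_le Nat.zero_lt_one (le_max_right _ _)
                · rw [hL'v, hdd]
                  calc (unp G ((it G L j).1 ∪ ∅) v).card
                      ≤ (unp G (it G L j).1 v).card :=
                        card_le_card (unp_mono G subset_union_left v)
                    _ ≤ max (unp G (it G L j).1 v).card 1 := le_max_left _ _
              · obtain ⟨hw1, _, hw3⟩ := (mem_fset G).mp hw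
                rw [hL'ne w hwv]
                exact ⟨hw1, le_trans (card_le_card (unp_mono G subset_union_left w)) hw3⟩)
          have h := (this K le_rfl).1
          rw [hK] at h
          exact univ_subset_iff.mp ((subset_union_left).trans h)
        -- measure decreases
        have hsq : (∑ w, L' w * L' w) < n := by
          rw [← hn]
          have h1 : ∑ w, L' w * L' w =
              L' v * L' v + ∑ w ∈ univ.erase v, L' w * L' w := by
            rw [← Finset.add_sum_erase _ _ (mem_univ v)]
          have h2 : ∑ w, L w * L w = L v * L v + ∑ w ∈ univ.erase v, L w * L w := by
            rw [← Finset.add_sum_erase _ _ (mem_univ v)]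
          have h3 : ∑ w ∈ univ.erase v, L' w * L' w = ∑ w ∈ univ.erase v, L w * L w :=
            Finset.sum_congr rfl (fun w hw => by
              rw [hL'ne w (Finset.ne_of_mem_erase hw)])
          rw [h1, h2, h3, hL'v]
          exact Nat.add_lt_add_right (Nat.mul_self_lt_mul_self hmaxlt) _
        have hsum : (∑ w, L' w) ≤ ∑ w, L w := by
          have h1 : ∑ w, L' w = L' v + ∑ w ∈ univ.erase v, L' w := by
            rw [← Finset.add_sum_erase _ _ (mem_univ v)]
          have h2 : ∑ w, L w = L v + ∑ w ∈ univ.erase v, L w := by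
            rw [← Finset.add_sum_erase _ _ (mem_univ v)]
          have h3 : ∑ w ∈ univ.erase v, L' w = ∑ w ∈ univ.erase v, L w :=
            Finset.sum_congr rfl (fun w hw => by
              rw [hL'ne w (Finset.ne_of_mem_erase hw)])
          rw [h1, h2, h3, hL'v]
          omega
        obtain ⟨L'', hs1, hs2, hs3⟩ := ih _ hsq L' rfl hsucc
        exact ⟨L'', hs1, hs2, hs3.trans hsum⟩
      · -- d = L v ≥ 2 : move one searcher from v to an unprotected neighbour u
        have hdeq : d = L v := le_antisymm hd (not_lt.mp hdlt)
        have hdpos : 0 < d := by omega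
        obtain ⟨u, hu⟩ := Finset.card_pos.mp hdpos
        have huadj : G.Adj v u ∧ u ∉ (it G L ks).1 := by
          simpa [unp] using hu
        have huv : u ≠ v := fun h => G.loopless.irrefl v (h ▸ huadj.1)
        have hLu : L u = 0 := by
          by_contra h
          have h0 : u ∈ (it G L 0).1 := by
            rw [it_zero]; simp only [mem_filter, mem_univ, true_and]; omega
          exact huadj.2 (P_mono G L (Nat.zero_le ks) h0)
        set L' := Function.update (Function.update L v (L v - 1)) u 1 with hL'
        have hL'u : L' u = 1 := Function.update_self _ _ _
        have hL'v : L' v = L v - 1 := by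
          rw [hL', Function.update_of_ne (Ne.symm huv), Function.update_self]
        have hL'ne : ∀ w, w ≠ v → w ≠ u → L' w = L w := fun w hwv hwu => by
          rw [hL', Function.update_of_ne hwu, Function.update_of_ne hwv]
        have hsucc : DedSuccessful G L' := by
          rw [succ_iff]
          refine ⟨K, ?_⟩
          have := coupling G L L' {u} K
            (fun w hw => by
              by_cases hwv : w = v
              · subst hwv; rw [hL'v]; omega
              · by_cases hwu : w = u
                · subst hwu; omega
                · rw [hL'ne w hwv hwu]; exact hw)
            (by intro a ha; rw [Finset.mem_singleton] at ha; subst ha; rw [hL'u]; omega)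
            (fun j hj w hw => by
              obtain ⟨hw1, hw2, hw3⟩ := (mem_fset G).mp hw
              by_cases hwu : w = u
              · subst hwu; omega
              by_cases hwv : w = v
              · rw [hwv] at hw ⊢
                have hje : j = ks := fset_unique G hw hvfire
                subst hje
                refine ⟨by rw [hL'v]; omega, ?_⟩
                rw [hL'v]
                have hsub : unp G ((it G L j).1 ∪ {u}) v ⊆ (unp G (it G L j).1 v).erase u := by
                  intro x hx
                  simp only [unp, mem_filter, mem_univ, true_and, mem_union,
                    Finset.mem_singleton, mem_erase] at hx ⊢
                  push_neg at hx
                  exact ⟨hx.2.2, hx.1, hx.2.1⟩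
                calc (unp G ((it G L j).1 ∪ {u}) v).card
                    ≤ ((unp G (it G L j).1 v).erase u).card := card_le_card hsub
                  _ = d - 1 := by rw [card_erase_of_mem hu, ← hdd]
                  _ ≤ L v - 1 := by omega
              · rw [hL'ne w hwv hwu]
                exact ⟨hw1, le_trans (card_le_card (unp_mono G subset_union_left w)) hw3⟩)
          have h := (this K le_rfl).1
          rw [hK] at h
          exact univ_subset_iff.mp ((subset_union_left).trans h)
        -- sums
        have hsplit : ∀ f : V → ℕ, ∑ w, f w =
            f v + f u + ∑ w ∈ (univ.erase v).erase u, f w := by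
          intro f
          rw [← Finset.add_sum_erase _ _ (mem_univ v),
            ← Finset.add_sum_erase _ f (Finset.mem_erase.mpr ⟨huv, mem_univ u⟩)]
          ring
        have hcong : ∑ w ∈ (univ.erase v).erase u, L' w =
            ∑ w ∈ (univ.erase v).erase u, L w :=
          Finset.sum_congr rfl (fun w hw => by
            rw [hL'ne w (Finset.ne_of_mem_erase (Finset.mem_of_mem_erase hw))
              (Finset.ne_of_mem_erase hw)])
        have hcong2 : ∑ w ∈ (univ.erase v).erase u, L' w * L' w =
            ∑ w ∈ (univ.erase v).erase u, L w * L w :=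
          Finset.sum_congr rfl (fun w hw => by
            rw [hL'ne w (Finset.ne_of_mem_erase (Finset.mem_of_mem_erase hw))
              (Finset.ne_of_mem_erase hw)])
        have hsum : (∑ w, L' w) ≤ ∑ w, L w := by
          rw [hsplit L', hsplit L, hcong, hL'u, hL'v, hLu]
          omega
        have hsq : (∑ w, L' w * L' w) < n := by
          rw [← hn, hsplit (fun w => L' w * L' w), hsplit (fun w => L w * L w)]
          rw [hcong2, hL'u, hL'v, hLu]
          have h2 : 2 ≤ L v := by omega
          have : (L v - 1) * (L v - 1) + 1 * 1 < L v * L v + 0 * 0 := by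
            obtain ⟨b, hb⟩ : ∃ b, L v = b + 1 := ⟨L v - 1, by omega⟩
            rw [hb]
            simp only [Nat.add_sub_cancel]
            nlinarith
          omega
        obtain ⟨L'', hs1, hs2, hs3⟩ := ih _ hsq L' rfl hsucc
        exact ⟨L'', hs1, hs2, hs3.trans hsum⟩
    · -- v never fires before success: reduce L v to 1
      set L' := Function.update L v 1 with hL'
      have hL'v : L' v = 1 := Function.update_self _ _ _
      have hL'ne : ∀ w, w ≠ v → L' w = L w := fun w hw => Function.update_of_ne hw _ _
      have hsucc : DedSuccessful G L' := by
        rw [succ_iff]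
        refine ⟨K, ?_⟩
        have := coupling G L L' ∅ K
          (fun w hw => by
            by_cases hwv : w = v
            · subst hwv; rw [hL'v]; omega
            · rw [hL'ne w hwv]; exact hw)
          (by simp)
          (fun j hj w hw => by
            have hwv : w ≠ v := by
              intro h; subst h
              exact hvF (F_mono G L (by omega : j + 1 ≤ K) (fire_mem_F G hw))
            obtain ⟨hw1, _, hw3⟩ := (mem_fset G).mp hw
            rw [hL'ne w hwv]
            exact ⟨hw1, le_trans (card_le_card (unp_mono G subset_union_left w)) hw3⟩)
        have h := (this K le_rfl).1
        rw [hK] at h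
        exact univ_subset_iff.mp ((subset_union_left).trans h)
      have hsq : (∑ w, L' w * L' w) < n := by
        rw [← hn]
        have h1 : ∑ w, L' w * L' w = L' v * L' v + ∑ w ∈ univ.erase v, L' w * L' w := by
          rw [← Finset.add_sum_erase _ _ (mem_univ v)]
        have h2 : ∑ w, L w * L w = L v * L v + ∑ w ∈ univ.erase v, L w * L w := by
          rw [← Finset.add_sum_erase _ _ (mem_univ v)]
        have h3 : ∑ w ∈ univ.erase v, L' w * L' w = ∑ w ∈ univ.erase v, L w * L w :=
          Finset.sum_congr rfl (fun w hw => by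
            rw [hL'ne w (Finset.ne_of_mem_erase hw)])
        rw [h1, h2, h3, hL'v]
        nlinarith
      have hsum : (∑ w, L' w) ≤ ∑ w, L w := by
        have h1 : ∑ w, L' w = L' v + ∑ w ∈ univ.erase v, L' w := by
          rw [← Finset.add_sum_erase _ _ (mem_univ v)]
        have h2 : ∑ w, L w = L v + ∑ w ∈ univ.erase v, L w := by
          rw [← Finset.add_sum_erase _ _ (mem_univ v)]
        have h3 : ∑ w ∈ univ.erase v, L' w = ∑ w ∈ univ.erase v, L w :=
          Finset.sum_congr rfl (fun w hw => by
            rw [hL'ne w (Finset.ne_of_mem_erase hw)])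
        rw [h1, h2, h3, hL'v]
        omega
      obtain ⟨L'', hs1, hs2, hs3⟩ := ih _ hsq L' rfl hsucc
      exact ⟨L'', hs1, hs2, hs3.trans hsum⟩

end DedAux

open Finset in
theorem exists_standard_successful_layout {V : Type*} [Fintype V] [DecidableEq V]
    (G : SimpleGraph V) [DecidableRel G.Adj] :
    ∃ L : V → ℕ, (∀ v, L v ≤ 1) ∧ DedSuccessful G L ∧
      (∑ v, L v) = deductionNumber G := by
  have hset : deductionNumber G = sInf {n | ∃ L : V → ℕ, (∑ v, L v) = n ∧ DedSuccessful G L} := by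
    unfold deductionNumber
    congr!
  set S := {n | ∃ L : V → ℕ, (∑ v, L v) = n ∧ DedSuccessful G L} with hS
  have h1 : (∑ _v : V, 1) ∈ S := by
    refine ⟨fun _ => 1, rfl, ⟨0, ?_⟩⟩
    simp
  have h2 : sInf S ∈ S := Nat.sInf_mem ⟨_, h1⟩
  obtain ⟨L, hLsum, hLsucc⟩ := h2
  obtain ⟨L', hstd, hsucc, hle⟩ := DedAux.standardize G _ L rfl hLsucc
  have hge : sInf S ≤ ∑ v, L' v := Nat.sInf_le ⟨L', rfl, hsucc⟩
  refine ⟨L', hstd, hsucc, ?_⟩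
  rw [hset]
  omega
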